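/- Let K be a 3DM instance and σ(K) the associated spanUFP instance. For any nodes x_i ∈ X, y_j ∈ Y, z_k ∈ Z, any hyperedge h_ℓ ∈ E (not necessarily with h_ℓ = (x_i,y_j,z_k)), and any block I of σ(K), there is a feasible schedule inside I of either the seven tasks t_L(x_i), t_R(x_i), t_L(y_j), t_R(y_j), t_L(z_k), t_R(z_k), t_L(h_ℓ), or the seven tasks t_L(x_i), t_R(x_i), t_L(y_j), t_R(y_j), t_L(z_k), t_R(z_k), t_R(h_ℓ). -/

import Mathlib

/-- `ρ = max {29, 3q}`. -/
def rho (q : ℕ) : ℕ := max 29 (3 * q)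

/-- The number `x'_i = iρ + 1` associated to the node `x_i`. -/
def xnum (q i : ℕ) : ℤ := (i : ℤ) * (rho q : ℤ) + 1

/-- The number `y'_j = jρ² + 2` associated to the node `y_j`. -/
def ynum (q j : ℕ) : ℤ := (j : ℤ) * (rho q : ℤ) ^ 2 + 2

/-- The number `z'_k = kρ³ + 4` associated to the node `z_k`. -/
def znum (q k : ℕ) : ℤ := (k : ℤ) * (rho q : ℤ) ^ 3 + 4

/-- The number `h'_ℓ = -iρ - jρ² - kρ³ - 7` associated to the hyperedge `h_ℓ = (x_i, y_j, z_k)`. -/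
def hnum (q : ℕ) (h : ℕ × ℕ × ℕ) : ℤ :=
  -((h.1 : ℤ) * (rho q : ℤ)) - (h.2.1 : ℤ) * (rho q : ℤ) ^ 2 - (h.2.2 : ℤ) * (rho q : ℤ) ^ 3 - 7

/-- The set `Q(K)` of the `3q + m` integers associated to a 3DM instance `K = (q, E)`. -/
def QK (q : ℕ) (E : Finset (ℕ × ℕ × ℕ)) : Finset ℤ :=
  ((Finset.Icc 1 q).image (xnum q)) ∪ ((Finset.Icc 1 q).image (ynum q)) ∪
    ((Finset.Icc 1 q).image (znum q)) ∪ (E.image (hnum q))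

/-- `(q, E)` is a 3DM instance: every hyperedge is a triple of node indices in `{1, …, q}`
(`X`, `Y` and `Z` are identified with `{1, …, q}`). -/
def ValidE (q : ℕ) (E : Finset (ℕ × ℕ × ℕ)) : Prop :=
  ∀ h ∈ E, h.1 ∈ Finset.Icc 1 q ∧ h.2.1 ∈ Finset.Icc 1 q ∧ h.2.2 ∈ Finset.Icc 1 q

/-- A hypermatching: no two distinct hyperedges share a node. -/
def Matching (M : Finset (ℕ × ℕ × ℕ)) : Prop :=
  ∀ h ∈ M, ∀ h' ∈ M, h ≠ h' → h.1 ≠ h'.1 ∧ h.2.1 ≠ h'.2.1 ∧ h.2.2 ≠ h'.2.2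

/-- `μ = 1 + max_{u' ∈ Q(K)} 10|u'|`. -/
def mu (q : ℕ) (E : Finset (ℕ × ℕ × ℕ)) : ℕ :=
  1 + (QK q E).sup (fun u => 10 * u.natAbs)

/-- `A = 5μ + 4`. -/
def Aval (q : ℕ) (E : Finset (ℕ × ℕ × ℕ)) : ℕ := 5 * mu q E + 4

/-- The path of `σ(K)` has `(2A+1)q - 1` edges; edges are identified with the
integers `0, 1, …, (2A+1)q - 2`. -/
def numEdges (q : ℕ) (E : Finset (ℕ × ℕ × ℕ)) : ℤ := (2 * (Aval q E : ℤ) + 1) * q - 1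

/-- The capacity profile of `σ(K)`: within each block of `2A` consecutive edges, the
leftmost `A` edges have capacity `4A + 4` and the rightmost `A` edges have capacity `4A`;
blocks are separated by single edges of capacity `0`. -/
def cap (q : ℕ) (E : Finset (ℕ × ℕ × ℕ)) (e : ℤ) : ℤ :=
  let A : ℤ := (Aval q E : ℤ)
  let r := e % (2 * A + 1)
  if r < A then 4 * A + 4 else if r < 2 * A then 4 * A else 0

/-- An element `u ∈ X ∪ Y ∪ Z ∪ E` of the 3DM instance. -/
inductive Elem where
  | X : ℕ → Elem
  | Y : ℕ → Elem
  | Z : ℕ → Elem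
  | H : ℕ × ℕ × ℕ → Elem
deriving DecidableEq

/-- The number `u' ∈ Q(K)` associated to `u ∈ X ∪ Y ∪ Z ∪ E`. -/
def elemVal (q : ℕ) : Elem → ℤ
  | .X i => xnum q i
  | .Y j => ynum q j
  | .Z k => znum q k
  | .H h => hnum q h

/-- `u` is an actual element of the instance `(q, E)`. -/
def validElem (q : ℕ) (E : Finset (ℕ × ℕ × ℕ)) : Elem → Prop
  | .X i => i ∈ Finset.Icc 1 q
  | .Y j => j ∈ Finset.Icc 1 q
  | .Z k => k ∈ Finset.Icc 1 q
  | .H h => h ∈ E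

/-- A task of `σ(K)` is a pair `(u, s)` with `u ∈ X ∪ Y ∪ Z ∪ E`; `s = true` encodes the
task `t_L(u)` and `s = false` encodes the task `t_R(u)`. All tasks have weight 1. -/
abbrev UTask := Elem × Bool

/-- The length of a task: `t_L(u)` has length `A - 10u'`, `t_R(u)` has length `A + 10u'`. -/
def taskLen (q : ℕ) (E : Finset (ℕ × ℕ × ℕ)) (t : UTask) : ℤ :=
  if t.2 then (Aval q E : ℤ) - 10 * elemVal q t.1
  else (Aval q E : ℤ) + 10 * elemVal q t.1

/-- The demand of a task: `t_L(u)` has demand `A + 10u' + 1`, `t_R(u)` has demand `A - 10u'`. -/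
def taskDem (q : ℕ) (E : Finset (ℕ × ℕ × ℕ)) (t : UTask) : ℤ :=
  if t.2 then (Aval q E : ℤ) + 10 * elemVal q t.1 + 1
  else (Aval q E : ℤ) - 10 * elemVal q t.1

/-- The schedule of task `t`: the contiguous interval of `taskLen` edges starting at
edge `start t`. -/
noncomputable def sched (q : ℕ) (E : Finset (ℕ × ℕ × ℕ)) (start : UTask → ℤ) (t : UTask) : Finset ℤ :=
  Finset.Ico (start t) (start t + taskLen q E t)

/-- `(S, start)` is a feasible solution of `σ(K)`: every selected task is a task of the
instance, is scheduled (contiguously, with exactly its length) within the path, and on every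
edge `e` the total demand of the selected tasks whose schedule contains `e` is at most the
capacity of `e`. -/
def Feasible (q : ℕ) (E : Finset (ℕ × ℕ × ℕ)) (S : Finset UTask) (start : UTask → ℤ) : Prop :=
  (∀ t ∈ S, validElem q E t.1) ∧
  (∀ t ∈ S, 0 ≤ start t ∧ start t + taskLen q E t ≤ numEdges q E) ∧
  (∀ e : ℤ, 0 ≤ e → e < numEdges q E →
    ∑ t ∈ S.filter (fun t => e ∈ sched q E start t), taskDem q E t ≤ cap q E e)

/-- The first edge of the `b`-th block (`b ∈ {0, …, q-1}`). -/
def blockStart (q : ℕ) (E : Finset (ℕ × ℕ × ℕ)) (b : ℕ) : ℤ :=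
  (b : ℤ) * (2 * (Aval q E : ℤ) + 1)

/-- The `b`-th block of `2A` consecutive edges (`b ∈ {0, …, q-1}`). -/
noncomputable def block (q : ℕ) (E : Finset (ℕ × ℕ × ℕ)) (b : ℕ) : Finset ℤ :=
  Finset.Ico (blockStart q E b) (blockStart q E b + 2 * (Aval q E : ℤ))

/-- The seven tasks `t_L(x_i), t_R(x_i), t_L(y_j), t_R(y_j), t_L(z_k), t_R(z_k), t_L(h_ℓ)`. -/
def sevenTasksL (i j l : ℕ) (h : ℕ × ℕ × ℕ) : Finset UTask :=
  {(Elem.X i, true), (Elem.X i, false), (Elem.Y j, true), (Elem.Y j, false),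
   (Elem.Z l, true), (Elem.Z l, false), (Elem.H h, true)}

/-- The seven tasks `t_L(x_i), t_R(x_i), t_L(y_j), t_R(y_j), t_L(z_k), t_R(z_k), t_R(h_ℓ)`. -/
def sevenTasksR (i j l : ℕ) (h : ℕ × ℕ × ℕ) : Finset UTask :=
  {(Elem.X i, true), (Elem.X i, false), (Elem.Y j, true), (Elem.Y j, false),
   (Elem.Z l, true), (Elem.Z l, false), (Elem.H h, false)}

/-! ### Auxiliary lemmas -/

lemma QK_bound {q : ℕ} {E : Finset (ℕ × ℕ × ℕ)} {u : ℤ} (hu : u ∈ QK q E) :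
    10 * |u| ≤ (mu q E : ℤ) - 1 := by
  have h : 10 * u.natAbs ≤ (QK q E).sup (fun u : ℤ => 10 * u.natAbs) :=
    Finset.le_sup (f := fun u : ℤ => ((10 * u.natAbs : ℕ) : ℕ)) hu
  have h2 : mu q E = 1 + (QK q E).sup (fun u : ℤ => 10 * u.natAbs) := rfl
  rw [Int.abs_eq_natAbs]
  omega

lemma mem_QK_X {q : ℕ} (E : Finset (ℕ × ℕ × ℕ)) {i : ℕ} (hi : i ∈ Finset.Icc 1 q) :
    xnum q i ∈ QK q E := by
  simp only [QK, Finset.mem_union, Finset.mem_image]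
  exact Or.inl (Or.inl (Or.inl ⟨i, hi, rfl⟩))

lemma mem_QK_Y {q : ℕ} (E : Finset (ℕ × ℕ × ℕ)) {j : ℕ} (hj : j ∈ Finset.Icc 1 q) :
    ynum q j ∈ QK q E := by
  simp only [QK, Finset.mem_union, Finset.mem_image]
  exact Or.inl (Or.inl (Or.inr ⟨j, hj, rfl⟩))

lemma mem_QK_Z {q : ℕ} (E : Finset (ℕ × ℕ × ℕ)) {k : ℕ} (hk : k ∈ Finset.Icc 1 q) :
    znum q k ∈ QK q E := by
  simp only [QK, Finset.mem_union, Finset.mem_image]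
  exact Or.inl (Or.inr ⟨k, hk, rfl⟩)

lemma mem_QK_H {q : ℕ} {E : Finset (ℕ × ℕ × ℕ)} {h : ℕ × ℕ × ℕ} (hh : h ∈ E) :
    hnum q h ∈ QK q E := by
  simp only [QK, Finset.mem_union, Finset.mem_image]
  exact Or.inr ⟨h, hh, rfl⟩

lemma sum_seven {α M : Type*} [DecidableEq α] [AddCommMonoid M] (F : α → M) (a b c d e f g : α)
    (h1 : a ∉ ({b,c,d,e,f,g} : Finset α)) (h2 : b ∉ ({c,d,e,f,g} : Finset α))
    (h3 : c ∉ ({d,e,f,g} : Finset α)) (h4 : d ∉ ({e,f,g} : Finset α))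
    (h5 : e ∉ ({f,g} : Finset α)) (h6 : f ∉ ({g} : Finset α)) :
    ∑ t ∈ ({a,b,c,d,e,f,g} : Finset α), F t
      = F a + (F b + (F c + (F d + (F e + (F f + F g))))) := by
  rw [Finset.sum_insert h1, Finset.sum_insert h2, Finset.sum_insert h3, Finset.sum_insert h4,
    Finset.sum_insert h5, Finset.sum_insert h6, Finset.sum_singleton]

/-- The start function used in the construction. -/
def stK (q : ℕ) (E : Finset (ℕ × ℕ × ℕ)) (b : ℕ) : UTask → ℤ := fun t =>
  if t.2 then blockStart q E b
  else match t.1 with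
    | Elem.H _ => blockStart q E b + (Aval q E : ℤ)
    | u => blockStart q E b + (Aval q E : ℤ) - 10 * elemVal q u

lemma stK_true (q : ℕ) (E : Finset (ℕ × ℕ × ℕ)) (b : ℕ) (u : Elem) :
    stK q E b (u, true) = blockStart q E b := rfl

lemma stK_X (q : ℕ) (E : Finset (ℕ × ℕ × ℕ)) (b i : ℕ) :
    stK q E b (Elem.X i, false)
      = blockStart q E b + (Aval q E : ℤ) - 10 * elemVal q (Elem.X i) := rfl

lemma stK_Y (q : ℕ) (E : Finset (ℕ × ℕ × ℕ)) (b j : ℕ) :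
    stK q E b (Elem.Y j, false)
      = blockStart q E b + (Aval q E : ℤ) - 10 * elemVal q (Elem.Y j) := rfl

lemma stK_Z (q : ℕ) (E : Finset (ℕ × ℕ × ℕ)) (b k : ℕ) :
    stK q E b (Elem.Z k, false)
      = blockStart q E b + (Aval q E : ℤ) - 10 * elemVal q (Elem.Z k) := rfl

lemma stK_H (q : ℕ) (E : Finset (ℕ × ℕ × ℕ)) (b : ℕ) (h : ℕ × ℕ × ℕ) :
    stK q E b (Elem.H h, false) = blockStart q E b + (Aval q E : ℤ) := rfl

lemma cap_nonneg (q : ℕ) (E : Finset (ℕ × ℕ × ℕ)) (e : ℤ) : 0 ≤ cap q E e := by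
  have : (0:ℤ) ≤ (Aval q E : ℤ) := Int.natCast_nonneg _
  simp only [cap]
  split_ifs <;> omega

lemma cap_block (q : ℕ) (E : Finset (ℕ × ℕ × ℕ)) (b : ℕ) (e : ℤ)
    (h1 : blockStart q E b ≤ e) (h2 : e < blockStart q E b + 2 * (Aval q E : ℤ)) :
    cap q E e = if e - blockStart q E b < (Aval q E : ℤ) then 4 * (Aval q E : ℤ) + 4
      else 4 * (Aval q E : ℤ) := by
  have hb : blockStart q E b = (b : ℤ) * (2 * (Aval q E : ℤ) + 1) := rfl
  have he : e = (e - blockStart q E b) + (2 * (Aval q E : ℤ) + 1) * (b : ℤ) := by rw [hb]; ring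
  have hm : e % (2 * (Aval q E : ℤ) + 1) = e - blockStart q E b := by
    conv_lhs => rw [he]
    rw [Int.add_mul_emod_self_left]
    exact Int.emod_eq_of_lt (by omega) (by omega)
  simp only [cap, hm]
  split_ifs <;> omega

set_option maxHeartbeats 4000000 in
/-- For any nodes `x_i ∈ X`, `y_j ∈ Y`, `z_k ∈ Z`, any hyperedge `h_ℓ ∈ E` (not necessarily
with `h_ℓ = (x_i, y_j, z_k)`) and any block `I` of `σ(K)`, there is a feasible schedule inside
`I` of either the seven tasks `t_L(x_i), t_R(x_i), t_L(y_j), t_R(y_j), t_L(z_k), t_R(z_k),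
t_L(h_ℓ)`, or the seven tasks `t_L(x_i), t_R(x_i), t_L(y_j), t_R(y_j), t_L(z_k), t_R(z_k),
t_R(h_ℓ)`. -/
theorem seven_tasks_per_block (q : ℕ) (E : Finset (ℕ × ℕ × ℕ)) (hE : ValidE q E)
    (i j l : ℕ) (hi : i ∈ Finset.Icc 1 q) (hj : j ∈ Finset.Icc 1 q) (hl : l ∈ Finset.Icc 1 q)
    (h : ℕ × ℕ × ℕ) (hh : h ∈ E) (b : ℕ) (hb : b < q) :
    ∃ start : UTask → ℤ,
      (Feasible q E (sevenTasksL i j l h) start ∧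
        ∀ t ∈ sevenTasksL i j l h, sched q E start t ⊆ block q E b) ∨
      (Feasible q E (sevenTasksR i j l h) start ∧
        ∀ t ∈ sevenTasksR i j l h, sched q E start t ⊆ block q E b) := by
  classical
  obtain ⟨hha, hhb2, hhc⟩ := hE h hh
  have hrho : (0:ℤ) ≤ (rho q : ℤ) := Int.natCast_nonneg _
  have hin1 : (0:ℤ) ≤ (i:ℤ) * (rho q : ℤ) := by positivity
  have hjn1 : (0:ℤ) ≤ (j:ℤ) * (rho q : ℤ) ^ 2 := by positivity
  have hln1 : (0:ℤ) ≤ (l:ℤ) * (rho q : ℤ) ^ 3 := by positivity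
  have hp1 : (0:ℤ) ≤ (h.1:ℤ) * (rho q : ℤ) := by positivity
  have hp2 : (0:ℤ) ≤ (h.2.1:ℤ) * (rho q : ℤ) ^ 2 := by positivity
  have hp3 : (0:ℤ) ≤ (h.2.2:ℤ) * (rho q : ℤ) ^ 3 := by positivity
  have hxpos : 1 ≤ xnum q i := by simp only [xnum]; linarith
  have hypos : 1 ≤ ynum q j := by simp only [ynum]; linarith
  have hzpos : 1 ≤ znum q l := by simp only [znum]; linarith
  have hhneg : hnum q h ≤ -7 := by simp only [hnum]; linarith
  have hxb : 10 * xnum q i ≤ (mu q E : ℤ) - 1 := by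
    have := QK_bound (mem_QK_X E hi)
    rwa [abs_of_nonneg (by linarith)] at this
  have hyb : 10 * ynum q j ≤ (mu q E : ℤ) - 1 := by
    have := QK_bound (mem_QK_Y E hj)
    rwa [abs_of_nonneg (by linarith)] at this
  have hzb : 10 * znum q l ≤ (mu q E : ℤ) - 1 := by
    have := QK_bound (mem_QK_Z E hl)
    rwa [abs_of_nonneg (by linarith)] at this
  have hhbd : -(10 * hnum q h) ≤ (mu q E : ℤ) - 1 := by
    have := QK_bound (mem_QK_H (q := q) hh)
    rw [abs_of_nonpos (by linarith)] at this
    linarith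
  have hm1 : (1:ℤ) ≤ (mu q E : ℤ) := by exact_mod_cast Nat.le_add_right 1 _
  have hA : (Aval q E : ℤ) = 5 * (mu q E : ℤ) + 4 := by unfold Aval; push_cast; ring
  have hB0 : 0 ≤ blockStart q E b := by unfold blockStart; positivity
  have hBend : blockStart q E b + 2 * (Aval q E : ℤ) ≤ numEdges q E := by
    have hbq : (b:ℤ) + 1 ≤ (q:ℤ) := by exact_mod_cast hb
    have hAnn : (0:ℤ) ≤ (Aval q E : ℤ) := Int.natCast_nonneg _
    unfold blockStart numEdges
    nlinarith [mul_le_mul_of_nonneg_right hbq (by linarith : (0:ℤ) ≤ 2*(Aval q E:ℤ)+1)]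
  refine ⟨stK q E b, ?_⟩
  by_cases hD : 10 * xnum q i + 10 * ynum q j + 10 * znum q l + 10 * hnum q h ≤ 0
  · left
    have hsub : ∀ t ∈ sevenTasksL i j l h, sched q E (stK q E b) t ⊆ block q E b := by
      intro t ht x hx
      simp only [sevenTasksL, Finset.mem_insert, Finset.mem_singleton] at ht
      rcases ht with rfl|rfl|rfl|rfl|rfl|rfl|rfl <;>
        simp only [sched, stK_true, stK_X, stK_Y, stK_Z, stK_H, taskLen, elemVal, block,
          Finset.mem_Ico, if_true, if_false, Bool.false_eq_true, ite_true, ite_false] at hx ⊢ <;>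
        omega
    refine ⟨⟨?_, ?_, ?_⟩, hsub⟩
    · intro t ht
      simp only [sevenTasksL, Finset.mem_insert, Finset.mem_singleton] at ht
      rcases ht with rfl|rfl|rfl|rfl|rfl|rfl|rfl <;> simp [validElem, hi, hj, hl, hh]
    · intro t ht
      simp only [sevenTasksL, Finset.mem_insert, Finset.mem_singleton] at ht
      rcases ht with rfl|rfl|rfl|rfl|rfl|rfl|rfl <;>
        simp only [stK_true, stK_X, stK_Y, stK_Z, stK_H, taskLen, elemVal, if_true, if_false,
          Bool.false_eq_true, ite_true, ite_false] <;>
        constructor <;> omega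
    · intro e he0 heN
      by_cases hin : e ∈ block q E b
      · simp only [block, Finset.mem_Ico] at hin
        rw [Finset.sum_filter, cap_block q E b e (by omega) (by omega)]
        unfold sevenTasksL
        rw [sum_seven _ _ _ _ _ _ _ _ (by simp) (by simp) (by simp) (by simp) (by simp) (by simp)]
        simp only [sched, stK_true, stK_X, stK_Y, stK_Z, stK_H, taskLen, taskDem, elemVal,
          Finset.mem_Ico, if_true, if_false, Bool.false_eq_true, ite_true, ite_false]
        split_ifs <;> omega
      · rw [Finset.filter_false_of_mem (fun t ht hmem => hin (hsub t ht hmem)), Finset.sum_empty]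
        exact cap_nonneg q E e
  · right
    have hsub : ∀ t ∈ sevenTasksR i j l h, sched q E (stK q E b) t ⊆ block q E b := by
      intro t ht x hx
      simp only [sevenTasksR, Finset.mem_insert, Finset.mem_singleton] at ht
      rcases ht with rfl|rfl|rfl|rfl|rfl|rfl|rfl <;>
        simp only [sched, stK_true, stK_X, stK_Y, stK_Z, stK_H, taskLen, elemVal, block,
          Finset.mem_Ico, if_true, if_false, Bool.false_eq_true, ite_true, ite_false] at hx ⊢ <;>
        omega
    refine ⟨⟨?_, ?_, ?_⟩, hsub⟩
    · intro t ht
      simp only [sevenTasksR, Finset.mem_insert, Finset.mem_singleton] at ht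
      rcases ht with rfl|rfl|rfl|rfl|rfl|rfl|rfl <;> simp [validElem, hi, hj, hl, hh]
    · intro t ht
      simp only [sevenTasksR, Finset.mem_insert, Finset.mem_singleton] at ht
      rcases ht with rfl|rfl|rfl|rfl|rfl|rfl|rfl <;>
        simp only [stK_true, stK_X, stK_Y, stK_Z, stK_H, taskLen, elemVal, if_true, if_false,
          Bool.false_eq_true, ite_true, ite_false] <;>
        constructor <;> omega
    · intro e he0 heN
      by_cases hin : e ∈ block q E b
      · simp only [block, Finset.mem_Ico] at hin
        rw [Finset.sum_filter, cap_block q E b e (by omega) (by omega)]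
        unfold sevenTasksR
        rw [sum_seven _ _ _ _ _ _ _ _ (by simp) (by simp) (by simp) (by simp) (by simp) (by simp)]
        simp only [sched, stK_true, stK_X, stK_Y, stK_Z, stK_H, taskLen, taskDem, elemVal,
          Finset.mem_Ico, if_true, if_false, Bool.false_eq_true, ite_true, ite_false]
        split_ifs <;> omega
      · rw [Finset.filter_false_of_mem (fun t ht hmem => hin (hsub t ht hmem)), Finset.sum_empty]
        exact cap_nonneg q E e
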